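/- If f₁ and f₂ are nonnegative random variables with disjoint supports, then f̂₁ f̂₂ = f̂₂ f̂₁ = 0, and consequently ‖f̂₁ + f̂₂‖ = max(‖f̂₁‖, ‖f̂₂‖). -/

import Mathlib

open MeasureTheory ContinuousLinearMap

noncomputable section

variable {Ω : Type*} [MeasurableSpace Ω]

/-- `T` is the quantization `f̂` of the nonnegative random variable `f`:
the integral operator with kernel `min (f x) (f y)`. -/
def IsQuantization (ν : Measure Ω) (f : Ω → ℝ) (T : Lp ℂ 2 ν →L[ℂ] Lp ℂ 2 ν) : Prop :=
  ∀ g : Lp ℂ 2 ν,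
    (T g : Ω → ℂ) =ᵐ[ν] fun y => ∫ x, ((min (f x) (f y) : ℝ) : ℂ) * (g : Ω → ℂ) x ∂ν

set_option linter.unusedSectionVars false

section Aux

variable {ν : Measure Ω} [IsProbabilityMeasure ν]

lemma quant_kill {f : Ω → ℝ} (hf0 : ∀ x, 0 ≤ f x)
    {T : Lp ℂ 2 ν →L[ℂ] Lp ℂ 2 ν} (hT : IsQuantization ν f T) {v : Lp ℂ 2 ν}
    (hv : (fun x => (f x : ℂ) * (v : Ω → ℂ) x) =ᵐ[ν] 0) : T v = 0 := by
  rw [Lp.eq_zero_iff_ae_eq_zero]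
  refine (hT v).trans (Filter.Eventually.of_forall fun y => ?_)
  show (∫ x, ((min (f x) (f y) : ℝ) : ℂ) * (v : Ω → ℂ) x ∂ν) = 0
  refine integral_eq_zero_of_ae ?_
  filter_upwards [hv] with x hx
  show ((min (f x) (f y) : ℝ) : ℂ) * (v : Ω → ℂ) x = 0
  rcases mul_eq_zero.mp hx with h | h
  · have hfx : f x = 0 := by exact_mod_cast h
    simp [hfx, min_eq_left (hf0 y)]
  · simp [h]

lemma quant_vanish {f : Ω → ℝ} (hf0 : ∀ x, 0 ≤ f x)
    {T : Lp ℂ 2 ν →L[ℂ] Lp ℂ 2 ν} (hT : IsQuantization ν f T) (g : Lp ℂ 2 ν) :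
    ∀ᵐ y ∂ν, f y = 0 → (T g : Ω → ℂ) y = 0 := by
  filter_upwards [hT g] with y hy hfy
  rw [hy]
  refine integral_eq_zero_of_ae (Filter.Eventually.of_forall fun x => ?_)
  simp [hfy, min_eq_right (hf0 x)]

variable {f₁ f₂ : Ω → ℝ} {T₁ T₂ : Lp ℂ 2 ν →L[ℂ] Lp ℂ 2 ν}

lemma quant_comp (hf₁0 : ∀ x, 0 ≤ f₁ x) (hf₂0 : ∀ x, 0 ≤ f₂ x)
    (hd : ∀ᵐ x ∂ν, f₁ x * f₂ x = 0)
    (hT₁ : IsQuantization ν f₁ T₁) (hT₂ : IsQuantization ν f₂ T₂) :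
    T₁ ∘L T₂ = 0 := by
  refine ContinuousLinearMap.ext fun g => ?_
  simp only [ContinuousLinearMap.comp_apply, ContinuousLinearMap.zero_apply]
  refine quant_kill hf₁0 hT₁ ?_
  filter_upwards [hd, quant_vanish hf₂0 hT₂ g] with x hx h2
  show (f₁ x : ℂ) * (T₂ g : Ω → ℂ) x = 0
  rcases mul_eq_zero.mp hx with h | h
  · simp [h]
  · simp [h2 h]

lemma quant_adjoint_comp (hf₁0 : ∀ x, 0 ≤ f₁ x) (hf₂0 : ∀ x, 0 ≤ f₂ x)
    (hd : ∀ᵐ x ∂ν, f₁ x * f₂ x = 0)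
    (hT₁ : IsQuantization ν f₁ T₁) (hT₂ : IsQuantization ν f₂ T₂) :
    (adjoint T₁) ∘L T₂ = 0 := by
  refine ContinuousLinearMap.ext fun h => ?_
  simp only [ContinuousLinearMap.comp_apply, ContinuousLinearMap.zero_apply]
  have key : ∀ g : Lp ℂ 2 ν, (inner ℂ (T₂ h) (T₁ g) : ℂ) = 0 := by
    intro g
    rw [L2.inner_def]
    refine integral_eq_zero_of_ae ?_
    filter_upwards [hd, quant_vanish hf₁0 hT₁ g, quant_vanish hf₂0 hT₂ h] with x hx h1 h2
    rcases mul_eq_zero.mp hx with h' | h'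
    · rw [h1 h', inner_zero_right]; simp
    · rw [h2 h', inner_zero_left]; simp
  have h0 : (inner ℂ (adjoint T₁ (T₂ h)) (adjoint T₁ (T₂ h)) : ℂ) = 0 := by
    rw [adjoint_inner_left]
    exact key _
  exact inner_self_eq_zero.mp h0


lemma quant_comp_adjoint (hf₁0 : ∀ x, 0 ≤ f₁ x) (hf₂0 : ∀ x, 0 ≤ f₂ x)
    (hd : ∀ᵐ x ∂ν, f₁ x * f₂ x = 0)
    (hT₁ : IsQuantization ν f₁ T₁) (hT₂ : IsQuantization ν f₂ T₂) :
    T₁ ∘L (adjoint T₂) = 0 := by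
  refine ContinuousLinearMap.ext fun b => ?_
  simp only [ContinuousLinearMap.comp_apply, ContinuousLinearMap.zero_apply]
  set v : Lp ℂ 2 ν := adjoint T₂ b with hvdef
  rw [Lp.eq_zero_iff_ae_eq_zero]
  have h0 : (0 : Lp ℂ 2 ν) = (0 : Lp ℂ 2 ν) := rfl
  refine (hT₁ v).trans (Filter.Eventually.of_forall fun y => ?_)
  show (∫ x, ((min (f₁ x) (f₁ y) : ℝ) : ℂ) * (v : Ω → ℂ) x ∂ν) = 0
  set c := f₁ y with hcdef
  have hc0 : 0 ≤ c := hf₁0 y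
  by_cases hms : AEStronglyMeasurable (fun x => ((min (f₁ x) c : ℝ) : ℂ) * (v : Ω → ℂ) x) ν
  swap
  · exact integral_non_aestronglyMeasurable hms
  · set φ : Ω → ℂ := fun x => ((min (f₁ x) c : ℝ) : ℂ) * (v : Ω → ℂ) x with hφdef
    have hmin0 : ∀ x, 0 ≤ min (f₁ x) c := fun x => le_min (hf₁0 x) hc0
    have hbound : ∀ᵐ x ∂ν, ‖φ x‖ ≤ ‖(c : ℂ) * (v : Ω → ℂ) x‖ := by
      refine Filter.Eventually.of_forall fun x => ?_
      simp only [hφdef, norm_mul, Complex.norm_real]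
      rw [Real.norm_eq_abs, Real.norm_eq_abs, abs_of_nonneg (hmin0 x), abs_of_nonneg hc0]
      exact mul_le_mul_of_nonneg_right (min_le_right _ _) (norm_nonneg _)
    have hφL2 : MemLp φ 2 ν := MemLp.of_le ((Lp.memLp v).const_mul (c : ℂ)) hms hbound
    set W : Lp ℂ 2 ν := hφL2.toLp φ with hWdef
    have hWφ : (W : Ω → ℂ) =ᵐ[ν] φ := hφL2.coeFn_toLp
    have hT₂W : T₂ W = 0 := by
      refine quant_kill hf₂0 hT₂ ?_
      filter_upwards [hWφ, hd] with x h1 h2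
      show (f₂ x : ℂ) * (W : Ω → ℂ) x = 0
      rcases mul_eq_zero.mp h2 with h' | h'
      · rw [h1]
        simp [hφdef, h', min_eq_left hc0]
      · simp [h']
    have hiz : (inner ℂ v W : ℂ) = 0 := by
      rw [hvdef, adjoint_inner_left, hT₂W, inner_zero_right]
    have hint : ∫ x, (inner ℂ ((v : Ω → ℂ) x) ((W : Ω → ℂ) x) : ℂ) ∂ν = 0 := by
      rw [← L2.inner_def]; exact hiz
    set ψ : Ω → ℝ := fun x => min (f₁ x) c * ‖(v : Ω → ℂ) x‖ ^ 2 with hψdef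
    have hinteq : (fun x => (inner ℂ ((v : Ω → ℂ) x) ((W : Ω → ℂ) x) : ℂ))
        =ᵐ[ν] fun x => ((ψ x : ℝ) : ℂ) := by
      filter_upwards [hWφ] with x h1
      rw [h1]
      simp only [hφdef, hψdef, RCLike.inner_apply]
      rw [mul_assoc, Complex.mul_conj']
      push_cast
      ring
    have hψm : AEStronglyMeasurable ψ ν := by
      have h1 : AEStronglyMeasurable (fun x => (inner ℂ ((v : Ω → ℂ) x) ((W : Ω → ℂ) x) : ℂ)) ν :=
        (Lp.aestronglyMeasurable v).inner (Lp.aestronglyMeasurable W)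
      refine h1.re.congr ?_
      filter_upwards [hinteq] with x hx
      rw [hx]
      simp
    have hψint : Integrable ψ ν := by
      have hdom : Integrable (fun x => c * RCLike.re (inner ℂ ((v : Ω → ℂ) x) ((v : Ω → ℂ) x) : ℂ)) ν :=
        (L2.integrable_inner (𝕜 := ℂ) v v).re.const_mul c
      refine Integrable.mono' hdom hψm (Filter.Eventually.of_forall fun x => ?_)
      have hre : RCLike.re (inner ℂ ((v : Ω → ℂ) x) ((v : Ω → ℂ) x) : ℂ) = ‖(v : Ω → ℂ) x‖ ^ 2 := by
        rw [RCLike.inner_apply, Complex.mul_conj']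
        simp [RCLike.re_to_complex, ← Complex.ofReal_pow]
      rw [hre, Real.norm_eq_abs,
        abs_of_nonneg (mul_nonneg (hmin0 x) (sq_nonneg _))]
      exact mul_le_mul_of_nonneg_right (min_le_right _ _) (sq_nonneg _)
    have hψ0 : ψ =ᵐ[ν] 0 := by
      refine (integral_eq_zero_iff_of_nonneg_ae ?_ hψint).mp ?_
      · exact Filter.Eventually.of_forall fun x => mul_nonneg (hmin0 x) (sq_nonneg _)
      · have h2 : ∫ x, ((ψ x : ℝ) : ℂ) ∂ν = 0 := by
          rw [← integral_congr_ae hinteq]; exact hint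
        have h3 : ∫ x, ((ψ x : ℝ) : ℂ) ∂ν = (((∫ x, ψ x ∂ν : ℝ)) : ℂ) := integral_ofReal
        rw [h3, Complex.ofReal_eq_zero] at h2
        exact h2
    refine integral_eq_zero_of_ae ?_
    filter_upwards [hψ0] with x hx
    show ((min (f₁ x) c : ℝ) : ℂ) * (v : Ω → ℂ) x = 0
    have hx' : min (f₁ x) c * ‖(v : Ω → ℂ) x‖ ^ 2 = 0 := hx
    rcases mul_eq_zero.mp hx' with h' | h'
    · simp [h']
    · have hv0 : (v : Ω → ℂ) x = 0 := by
        have := sq_eq_zero_iff.mp h'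
        simpa using this
      simp [hv0]

end Aux

section CStar

lemma le_of_forall_two_pow {c m : ℝ} (hc : 0 ≤ c) (hm : 0 ≤ m)
    (h : ∀ n : ℕ, c ^ 2 ^ n ≤ 2 * m ^ 2 ^ n) : c ≤ m := by
  by_contra hlt
  push_neg at hlt
  rcases hm.eq_or_lt with hm0 | hm0
  · have h0 := h 0
    simp [← hm0] at h0
    linarith
  · have hr : 1 < c / m := (one_lt_div hm0).mpr hlt
    obtain ⟨n, hn⟩ := pow_unbounded_of_one_lt (2 : ℝ) hr
    have h1 : (c / m) ^ 2 ^ n ≤ 2 := by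
      rw [div_pow, div_le_iff₀ (pow_pos hm0 _)]
      simpa [mul_comm] using h n
    have h2 : (c / m) ^ n ≤ (c / m) ^ 2 ^ n :=
      pow_le_pow_right₀ hr.le (Nat.lt_two_pow_self (n := n)).le
    linarith

variable {R : Type*} [NormedRing R] [StarRing R] [CStarRing R]

lemma sa_norm_sq {a : R} (ha : IsSelfAdjoint a) : ‖a * a‖ = ‖a‖ ^ 2 := by
  have h : star a * a = a * a := by rw [ha.star_eq]
  rw [← h, CStarRing.norm_star_mul_self, sq]

lemma pow_two_pow_le : ∀ (n : ℕ) (a b : R), IsSelfAdjoint a → IsSelfAdjoint b →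
    a * b = 0 → b * a = 0 → ‖a + b‖ ^ 2 ^ n ≤ ‖a‖ ^ 2 ^ n + ‖b‖ ^ 2 ^ n := by
  intro n
  induction n with
  | zero => intro a b _ _ _ _; simpa using norm_add_le a b
  | succ n ih =>
    intro a b ha hb hab hba
    have hsq : (a + b) * (a + b) = a * a + b * b := by
      rw [add_mul, mul_add, mul_add, hab, hba]
      abel
    have haa : IsSelfAdjoint (a * a) := by
      show star (a * a) = a * a
      rw [star_mul, ha.star_eq]
    have hbb : IsSelfAdjoint (b * b) := by
      show star (b * b) = b * b
      rw [star_mul, hb.star_eq]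
    have habab : (a * a) * (b * b) = 0 := by
      calc (a * a) * (b * b) = a * ((a * b) * b) := by simp only [mul_assoc]
      _ = 0 := by rw [hab, zero_mul, mul_zero]
    have hbaba : (b * b) * (a * a) = 0 := by
      calc (b * b) * (a * a) = b * ((b * a) * a) := by simp only [mul_assoc]
      _ = 0 := by rw [hba, zero_mul, mul_zero]
    have h2 : (2 : ℕ) ^ (n + 1) = 2 * 2 ^ n := by ring
    calc ‖a + b‖ ^ 2 ^ (n + 1) = (‖a + b‖ ^ 2) ^ 2 ^ n := by rw [h2, pow_mul]
    _ = ‖(a + b) * (a + b)‖ ^ 2 ^ n := by rw [sa_norm_sq (ha.add hb)]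
    _ = ‖a * a + b * b‖ ^ 2 ^ n := by rw [hsq]
    _ ≤ ‖a * a‖ ^ 2 ^ n + ‖b * b‖ ^ 2 ^ n := ih _ _ haa hbb habab hbaba
    _ = ‖a‖ ^ 2 ^ (n + 1) + ‖b‖ ^ 2 ^ (n + 1) := by
        rw [sa_norm_sq ha, sa_norm_sq hb, h2, pow_mul, pow_mul]

lemma sa_le_norm_add {a b : R} (ha : IsSelfAdjoint a) (hba : b * a = 0) :
    ‖a‖ ≤ ‖a + b‖ := by
  rcases eq_or_lt_of_le (norm_nonneg a) with h0 | h0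
  · rw [← h0]; exact norm_nonneg _
  · have key : ‖a‖ * ‖a‖ ≤ ‖a + b‖ * ‖a‖ := by
      calc ‖a‖ * ‖a‖ = ‖a * a‖ := by rw [sa_norm_sq ha, sq]
      _ = ‖(a + b) * a‖ := by rw [add_mul, hba, add_zero]
      _ ≤ ‖a + b‖ * ‖a‖ := norm_mul_le _ _
    exact le_of_mul_le_mul_right key h0

lemma sa_norm_add_eq_max {a b : R} (ha : IsSelfAdjoint a) (hb : IsSelfAdjoint b)
    (hab : a * b = 0) (hba : b * a = 0) : ‖a + b‖ = max ‖a‖ ‖b‖ := by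
  refine le_antisymm ?_ (max_le (sa_le_norm_add ha hba) ?_)
  · refine le_of_forall_two_pow (norm_nonneg _)
      ((norm_nonneg a).trans (le_max_left _ _)) fun n => ?_
    calc ‖a + b‖ ^ 2 ^ n ≤ ‖a‖ ^ 2 ^ n + ‖b‖ ^ 2 ^ n := pow_two_pow_le n a b ha hb hab hba
    _ ≤ (max ‖a‖ ‖b‖) ^ 2 ^ n + (max ‖a‖ ‖b‖) ^ 2 ^ n :=
        add_le_add (pow_le_pow_left₀ (norm_nonneg _) (le_max_left _ _) _)
          (pow_le_pow_left₀ (norm_nonneg _) (le_max_right _ _) _)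
    _ = 2 * (max ‖a‖ ‖b‖) ^ 2 ^ n := by ring
  · rw [add_comm]
    exact sa_le_norm_add hb hab

end CStar

set_option maxHeartbeats 2000000 in
theorem stmt10 (ν : Measure Ω) [IsProbabilityMeasure ν] (f₁ f₂ : Ω → ℝ)
    (hf₁0 : ∀ x, 0 ≤ f₁ x) (hf₂0 : ∀ x, 0 ≤ f₂ x)
    (hdisj : (fun x => f₁ x * f₂ x) =ᵐ[ν] 0)
    (T₁ T₂ : Lp ℂ 2 ν →L[ℂ] Lp ℂ 2 ν)
    (hT₁ : IsQuantization ν f₁ T₁) (hT₂ : IsQuantization ν f₂ T₂) :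
    T₁ ∘L T₂ = 0 ∧ T₂ ∘L T₁ = 0 ∧ ‖T₁ + T₂‖ = max ‖T₁‖ ‖T₂‖ := by
  have hd : ∀ᵐ x ∂ν, f₁ x * f₂ x = 0 := by
    filter_upwards [hdisj] with x hx
    simpa using hx
  have hd' : ∀ᵐ x ∂ν, f₂ x * f₁ x = 0 := by
    filter_upwards [hd] with x hx
    rw [mul_comm]
    exact hx
  have h12 : T₁ ∘L T₂ = 0 := quant_comp hf₁0 hf₂0 hd hT₁ hT₂
  have h21 : T₂ ∘L T₁ = 0 := quant_comp hf₂0 hf₁0 hd' hT₂ hT₁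
  refine ⟨h12, h21, ?_⟩
  have hs12 : (adjoint T₁) ∘L T₂ = 0 := quant_adjoint_comp hf₁0 hf₂0 hd hT₁ hT₂
  have hs21 : (adjoint T₂) ∘L T₁ = 0 := quant_adjoint_comp hf₂0 hf₁0 hd' hT₂ hT₁
  have h1s2 : T₁ ∘L (adjoint T₂) = 0 := quant_comp_adjoint hf₁0 hf₂0 hd hT₁ hT₂
  have h2s1 : T₂ ∘L (adjoint T₁) = 0 := quant_comp_adjoint hf₂0 hf₁0 hd' hT₂ hT₁
  have e12 : star T₁ * T₂ = 0 := by rw [star_eq_adjoint, mul_def]; exact hs12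
  have e21 : star T₂ * T₁ = 0 := by rw [star_eq_adjoint, mul_def]; exact hs21
  have f12 : T₁ * star T₂ = 0 := by rw [star_eq_adjoint, mul_def]; exact h1s2
  have f21 : T₂ * star T₁ = 0 := by rw [star_eq_adjoint, mul_def]; exact h2s1
  have hstar : star (T₁ + T₂) * (T₁ + T₂) = star T₁ * T₁ + star T₂ * T₂ := by
    rw [star_add, add_mul, mul_add, mul_add, e12, e21]
    abel
  have hA : IsSelfAdjoint (star T₁ * T₁) := IsSelfAdjoint.star_mul_self T₁
  have hB : IsSelfAdjoint (star T₂ * T₂) := IsSelfAdjoint.star_mul_self T₂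
  have hAB : (star T₁ * T₁) * (star T₂ * T₂) = 0 := by
    calc (star T₁ * T₁) * (star T₂ * T₂) = star T₁ * ((T₁ * star T₂) * T₂) := by
          simp only [mul_assoc]
    _ = 0 := by rw [f12, zero_mul, mul_zero]
  have hBA : (star T₂ * T₂) * (star T₁ * T₁) = 0 := by
    calc (star T₂ * T₂) * (star T₁ * T₁) = star T₂ * ((T₂ * star T₁) * T₁) := by
          simp only [mul_assoc]
    _ = 0 := by rw [f21, zero_mul, mul_zero]
  have hmax := sa_norm_add_eq_max hA hB hAB hBA
  have nA : ‖star T₁ * T₁‖ = ‖T₁‖ * ‖T₁‖ := CStarRing.norm_star_mul_self (x := T₁)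
  have nB : ‖star T₂ * T₂‖ = ‖T₂‖ * ‖T₂‖ := CStarRing.norm_star_mul_self (x := T₂)
  have nS : ‖T₁ + T₂‖ * ‖T₁ + T₂‖ = ‖star (T₁ + T₂) * (T₁ + T₂)‖ :=
    (CStarRing.norm_star_mul_self (x := T₁ + T₂)).symm
  have hM : (0 : ℝ) ≤ max ‖T₁‖ ‖T₂‖ := (norm_nonneg T₁).trans (le_max_left _ _)
  have hmm : ‖T₁ + T₂‖ * ‖T₁ + T₂‖ = max ‖T₁‖ ‖T₂‖ * max ‖T₁‖ ‖T₂‖ := by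
    rw [nS, hstar, hmax, nA, nB]
    rcases le_total ‖T₁‖ ‖T₂‖ with h | h
    · rw [max_eq_right h, max_eq_right (mul_le_mul h h (norm_nonneg _) (norm_nonneg _))]
    · rw [max_eq_left h, max_eq_left (mul_le_mul h h (norm_nonneg _) (norm_nonneg _))]
  calc ‖T₁ + T₂‖ = Real.sqrt (‖T₁ + T₂‖ * ‖T₁ + T₂‖) :=
        (Real.sqrt_mul_self (norm_nonneg _)).symm
  _ = Real.sqrt (max ‖T₁‖ ‖T₂‖ * max ‖T₁‖ ‖T₂‖) := by rw [hmm]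
  _ = max ‖T₁‖ ‖T₂‖ := Real.sqrt_mul_self hM
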